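/- For n = 8k-1 with k ≥ 1, the quantity 2⟨α,β⟩/⟨β,β⟩ with α = e_1 and β = (1/2)Σ_{i=1}^{4k-1} e_i in ℝ^{4k-1} equals 2/(4k-1), which is never an integer; hence the spin representation Σ_{8k-1} of spin(8k-1) is never of Lie type. -/

import Mathlib

open scoped RealInnerProductSpace BigOperators

/-- For `n = 8k-1` (`k ≥ 1`), with `α = e₁` a root of
`spin(8k-1)` and `β = (1/2)∑_{i=1}^{4k-1} eᵢ` a weight of the spin
representation `Σ_{8k-1}` in `ℝ^{4k-1}`, one has `⟨α,β⟩ = 1/2` and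
`⟨β,β⟩ = (4k-1)/4`, and the quotient `2⟨α,β⟩/⟨β,β⟩` is never an integer;
hence (the integrality test for root systems of compact Lie algebras fails
and) `Σ_{8k-1}` is never of Lie type. -/
theorem spin_8k_minus_1_not_lie_type
    (k : ℕ) (hk : 1 ≤ k)
    (α β : EuclideanSpace ℝ (Fin (4 * k - 1)))
    (hα : α = EuclideanSpace.single ⟨0, by omega⟩ (1 : ℝ))
    (hβ : β = (1 / 2 : ℝ) • ∑ i, EuclideanSpace.single i (1 : ℝ)) :
    ⟪α, β⟫ = 1 / 2 ∧
    ⟪β, β⟫ = ((4 * k - 1 : ℕ) : ℝ) / 4 ∧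
    ¬ ∃ q : ℤ, 2 * ⟪α, β⟫ = (q : ℝ) * ⟪β, β⟫ := by
  have h1 : ⟪α, β⟫ = 1 / 2 := by
    subst hα hβ
    rw [real_inner_smul_right, inner_sum]
    simp_rw [EuclideanSpace.inner_single_right, EuclideanSpace.single_apply]
    simp
  have h2 : ⟪β, β⟫ = ((4 * k - 1 : ℕ) : ℝ) / 4 := by
    subst hβ
    rw [real_inner_smul_right, real_inner_smul_left, inner_sum]
    simp_rw [sum_inner, EuclideanSpace.inner_single_right, EuclideanSpace.single_apply]
    simp
    ring
  refine ⟨h1, h2, ?_⟩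
  rintro ⟨q, hq⟩
  rw [h1, h2] at hq
  have h3 : (4 : ℤ) = q * (4 * (k : ℤ) - 1) := by
    have h4 : (4 : ℝ) = (q : ℝ) * (4 * (k : ℝ) - 1) := by
      field_simp at hq
      rw [Nat.cast_sub (by omega)] at hq
      push_cast at hq
      linarith
    exact_mod_cast h4
  have hm : (4 * (k : ℤ) - 1) ∣ 4 := Dvd.intro_left q (by linarith)
  have hle := Int.le_of_dvd (by norm_num) hm
  have hk1 : k = 1 := by omega
  subst hk1
  norm_num at hm
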